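/- Online gradient descent with per-step updates and learning rate η = √(C(1−C/N)/(TB)), operating on the capped simplex with linear reward functions φ_t(f) = ⟨r_t, f⟩ where r_t is a one-hot vector, when the played state is frozen over batches of B steps, has regret at most √(C(1−C/N)·T·B). -/

import Mathlib

open Finset

set_option maxHeartbeats 1000000

local notation "⟪" x ", " y "⟫" => @inner ℝ _ _ x y


theorem modsum (B : ℕ) (hB : 0 < B) : ∀ T : ℕ,
    2 * (∑ t ∈ Finset.range T, ((t % B : ℕ) : ℤ)) =
      ((T : ℤ) - (T % B : ℕ)) * ((B : ℤ) - 1) + ((T % B : ℕ) : ℤ) * (((T % B : ℕ) : ℤ) - 1) := by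
  intro T
  induction T with
  | zero => simp
  | succ n ih =>
    rw [Finset.sum_range_succ]
    have hk : n % B < B := Nat.mod_lt _ hB
    have hmod : (n + 1) % B = (n % B + 1) % B := (Nat.mod_add_mod n B 1).symm
    by_cases h : n % B + 1 = B
    · have h0 : (n + 1) % B = 0 := by rw [hmod, h, Nat.mod_self]
      rw [h0]
      have hB' : (B : ℤ) = ((n % B : ℕ) : ℤ) + 1 := by exact_mod_cast h.symm
      simp only [Nat.cast_add, Nat.cast_one, Nat.cast_zero]
      linear_combination ih - (((n % B : ℕ):ℤ) + 1) * hB'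
    · have h1 : (n + 1) % B = n % B + 1 := by
        rw [hmod]; exact Nat.mod_eq_of_lt (lt_of_le_of_ne hk h)
      rw [h1]
      simp only [Nat.cast_add, Nat.cast_one]
      linear_combination ih

theorem modsum_real (B : ℕ) (hB : 0 < B) (T : ℕ) :
    (∑ t ∈ Finset.range T, ((t % B : ℕ) : ℝ)) ≤ (T : ℝ) * ((B : ℝ) - 1) / 2 := by
  have h := modsum B hB T
  have hk : (((T % B : ℕ) : ℤ)) < (B : ℤ) := by exact_mod_cast Nat.mod_lt _ hB
  have hk0 : (0 : ℤ) ≤ ((T % B : ℕ) : ℤ) := Int.natCast_nonneg _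
  have hkT : (((T % B : ℕ) : ℤ)) ≤ (T : ℤ) := by exact_mod_cast Nat.mod_le T B
  have h2 : 2 * (∑ t ∈ Finset.range T, ((t % B : ℕ) : ℤ)) ≤ (T : ℤ) * ((B : ℤ) - 1) := by
    nlinarith [h, hk, hk0, hkT]
  have h3 : (2 : ℝ) * (∑ t ∈ Finset.range T, ((t % B : ℕ) : ℝ)) ≤ (T : ℝ) * ((B : ℝ) - 1) := by
    have := (@Int.cast_le ℝ _ _ _).mpr h2
    push_cast at this ⊢
    convert this using 2 <;> norm_cast
  linarith
/-- Regret bound for per-step online gradient ascent on the capped simplex with one-hot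
linear rewards `φ_t(f) = ⟨r_t, f⟩`, frozen over batches of `B` steps: with learning rate
`η = √(C(1-C/N)/(TB))`, the regret is at most `√(C(1-C/N)·T·B)`. -/
theorem ogb_capped_simplex_regret (N C T B : ℕ)
    (hT : 0 < T) (hB : 0 < B) (hC : 0 < C) (hCN : C < N)
    (F : Set (EuclideanSpace ℝ (Fin N)))
    (hF : F = {f : EuclideanSpace ℝ (Fin N) |
      (∀ i, 0 ≤ f i ∧ f i ≤ 1) ∧ ∑ i, f i = (C : ℝ)})
    -- one-hot request vectors
    (r : ℕ → EuclideanSpace ℝ (Fin N))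
    (hone : ∀ t, ∃ j, r t j = 1 ∧ ∀ i, i ≠ j → r t i = 0)
    -- Euclidean projection onto F
    (proj : EuclideanSpace ℝ (Fin N) → EuclideanSpace ℝ (Fin N))
    (hprojmem : ∀ y, proj y ∈ F)
    (hprojmin : ∀ y, ∀ g ∈ F, ‖proj y - y‖ ≤ ‖g - y‖)
    -- learning rate
    (η : ℝ) (hη : η = Real.sqrt ((C : ℝ) * (1 - (C : ℝ) / N) / ((T : ℝ) * B)))
    -- per-step iterates, starting from the uniform allocation
    (f : ℕ → EuclideanSpace ℝ (Fin N))
    (hf0 : ∀ i, f 0 i = (C : ℝ) / N)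
    (hfstep : ∀ t, f (t + 1) = proj (f t + η • r t)) :
    ∀ x ∈ F,
      (∑ t ∈ Finset.range T, ∑ i, r t i * x i)
        - ∑ t ∈ Finset.range T, ∑ i, r t i * f (t / B * B) i
      ≤ Real.sqrt ((C : ℝ) * (1 - (C : ℝ) / N) * T * B) := by
  intro x hxF
  have hN : 0 < N := hC.trans hCN
  have hNR : (0:ℝ) < N := by exact_mod_cast hN
  have hCR : (0:ℝ) < C := by exact_mod_cast hC
  have hCNR : (C:ℝ) < N := by exact_mod_cast hCN
  set D : ℝ := (C : ℝ) * (1 - (C : ℝ) / N) with hD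
  have hDpos : 0 < D := by
    have h1 : (C:ℝ)/N < 1 := (div_lt_one hNR).mpr hCNR
    have : 0 < 1 - (C:ℝ)/N := by linarith
    exact mul_pos hCR this
  have hTBR : (0:ℝ) < (T:ℝ) * B := by positivity
  have hηpos : 0 < η := by
    rw [hη]; exact Real.sqrt_pos.mpr (div_pos hDpos hTBR)
  have hη2 : η ^ 2 = D / ((T:ℝ) * B) := by
    rw [hη]; exact Real.sq_sqrt (le_of_lt (div_pos hDpos hTBR))
  have hDeq : D = η ^ 2 * ((T:ℝ) * B) := by
    rw [hη2]; field_simp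
  -- convexity of F
  have hconv : Convex ℝ F := by
    rw [hF]
    intro p hp q hq a b ha hb hab
    simp only [Set.mem_setOf_eq] at hp hq ⊢
    refine ⟨fun i => ?_, ?_⟩
    · have h1 := hp.1 i; have h2 := hq.1 i
      have happ : (a • p + b • q) i = a * p i + b * q i := rfl
      rw [happ]
      constructor
      · nlinarith [h1.1, h2.1]
      · nlinarith [h1.2, h2.2]
    · have : ∀ i, (a • p + b • q) i = a * p i + b * q i := fun i => rfl
      simp_rw [this]
      rw [Finset.sum_add_distrib, ← Finset.mul_sum, ← Finset.mul_sum, hp.2, hq.2]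
      ring_nf
      nlinarith [hab]
  -- variational inequality for the projection
  have hvar : ∀ y, ∀ g ∈ F, ⟪y - proj y, g - proj y⟫ ≤ 0 := by
    intro y g hg
    have hmem := hprojmem y
    haveI : Nonempty F := ⟨⟨proj y, hmem⟩⟩
    have heq : ‖y - proj y‖ = ⨅ w : F, ‖y - (w : EuclideanSpace ℝ (Fin N))‖ := by
      refine le_antisymm (le_ciInf fun w => ?_) ?_
      · rw [norm_sub_rev]
        have hw := hprojmin y w.1 w.2
        rwa [norm_sub_rev (w.1 : EuclideanSpace ℝ (Fin N)) y] at hw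
      · exact ciInf_le ⟨0, fun z ⟨w, hw⟩ => hw ▸ norm_nonneg _⟩ (⟨proj y, hmem⟩ : F)
    exact (norm_eq_iInf_iff_real_inner_le_zero hconv hmem).mp heq g hg
  -- squared-distance contraction of projection
  have hproj_le : ∀ y, ∀ g ∈ F, ‖proj y - g‖ ^ 2 ≤ ‖y - g‖ ^ 2 := by
    intro y g hg
    have h1 := hvar y g hg
    have hyg : y - g = (y - proj y) - (g - proj y) := by abel
    have hexp := norm_sub_sq_real (y - proj y) (g - proj y)
    have h4 : ‖y - g‖ ^ 2 = ‖(y - proj y) - (g - proj y)‖ ^ 2 := by rw [hyg]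
    have h3 : ‖proj y - g‖ = ‖g - proj y‖ := norm_sub_rev _ _
    rw [h3, h4, hexp]
    nlinarith [sq_nonneg ‖y - proj y‖]
  -- membership of iterates
  have hmemf : ∀ t, f t ∈ F := by
    intro t
    cases t with
    | zero =>
      rw [hF]
      refine ⟨fun i => ?_, ?_⟩
      · rw [hf0]
        constructor
        · positivity
        · rw [div_le_one hNR]; exact le_of_lt hCNR
      · simp only [hf0]
        rw [Finset.sum_const, Finset.card_univ, Fintype.card_fin, nsmul_eq_mul]
        field_simp
    | succ s => rw [hfstep]; exact hprojmem _
  -- norm of one-hot vectors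
  have hrnorm : ∀ t, ‖r t‖ = 1 := by
    intro t
    obtain ⟨j, hj1, hj0⟩ := hone t
    rw [EuclideanSpace.norm_eq]
    simp only [Real.norm_eq_abs, sq_abs]
    have : ∑ i, r t i ^ 2 = 1 := by
      rw [Finset.sum_eq_single j]
      · rw [hj1]; norm_num
      · intro i _ hi; rw [hj0 i hi]; ring
      · intro h; exact absurd (Finset.mem_univ j) h
    rw [this, Real.sqrt_one]
  -- inner product with goal sums
  have hip : ∀ t (v : EuclideanSpace ℝ (Fin N)), (∑ i, r t i * v i) = ⟪r t, v⟫ := by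
    intro t v
    rw [PiLp.inner_apply]
    congr 1
    funext i; simp [mul_comm]
  have hxprop : (∀ i, 0 ≤ x i ∧ x i ≤ 1) ∧ ∑ i, x i = (C : ℝ) := by
    rw [hF] at hxF; exact hxF
  have hxsq : ∑ i, (x i)^2 ≤ (C : ℝ) := by
    calc ∑ i, (x i)^2 ≤ ∑ i, x i :=
          Finset.sum_le_sum (fun i _ => by nlinarith [(hxprop.1 i).1, (hxprop.1 i).2])
      _ = (C : ℝ) := hxprop.2
  -- distance of the initial point
  have hf0x : ‖f 0 - x‖^2 ≤ D := by
    have hne : ‖f 0 - x‖^2 = ∑ i, (f 0 i - x i)^2 := by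
      have h1 : ‖f 0 - x‖ = Real.sqrt (∑ i, (f 0 i - x i)^2) := by
        rw [EuclideanSpace.norm_eq]
        congr 1
        refine Finset.sum_congr rfl fun i _ => ?_
        rw [Real.norm_eq_abs, sq_abs]
        rfl
      rw [h1, Real.sq_sqrt (by positivity)]
    have hsum2 : ∑ i, (f 0 i - x i)^2
        = (N:ℝ)*((C:ℝ)/N)^2 - 2*((C:ℝ)/N)*(C:ℝ) + ∑ i, (x i)^2 := by
      have hc : ∀ i ∈ Finset.univ, (f 0 i - x i)^2
          = ((C:ℝ)/N)^2 - 2*((C:ℝ)/N)*x i + (x i)^2 := fun i _ => by rw [hf0 i]; ring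
      rw [Finset.sum_congr rfl hc, Finset.sum_add_distrib, Finset.sum_sub_distrib,
        Finset.sum_const, Finset.card_univ, Fintype.card_fin, ← Finset.mul_sum,
        hxprop.2, nsmul_eq_mul]
    have hq : (N:ℝ)*((C:ℝ)/N)^2 = (C:ℝ)*((C:ℝ)/N) := by
      field_simp
    rw [hne, hsum2, hD]
    nlinarith [hq, hxsq]
  -- step inequality
  have hstep : ∀ t, ∀ g ∈ F,
      ‖f (t+1) - g‖^2 ≤ ‖f t - g‖^2 + 2*η*⟪r t, f t - g⟫ + η^2 := by
    intro t g hg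
    have h1 := hproj_le (f t + η • r t) g hg
    rw [hfstep t]
    refine h1.trans_eq ?_
    have hrw : f t + η • r t - g = (f t - g) + η • r t := by abel
    rw [hrw, norm_add_sq_real]
    have h2 : ⟪f t - g, η • r t⟫ = η * ⟪r t, f t - g⟫ := by
      rw [real_inner_smul_right, real_inner_comm]
    rw [h2, norm_smul, hrnorm t, Real.norm_eq_abs, mul_one, sq_abs]
    ring
  -- key per-step inequality at the comparator
  have hkey : ∀ t, 2*η*⟪r t, x - f t⟫ ≤ ‖f t - x‖^2 - ‖f (t+1) - x‖^2 + η^2 := by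
    intro t
    have h := hstep t x hxF
    have h2 : ⟪r t, x - f t⟫ = -⟪r t, f t - x⟫ := by
      rw [show x - f t = -(f t - x) by abel, inner_neg_right]
    rw [h2]
    nlinarith [h]
  -- telescoping
  have hsum1 : ∑ t ∈ Finset.range T, (2*η*⟪r t, x - f t⟫) ≤ D + (T:ℝ)*η^2 := by
    calc ∑ t ∈ Finset.range T, (2*η*⟪r t, x - f t⟫)
        ≤ ∑ t ∈ Finset.range T, (‖f t - x‖^2 - ‖f (t+1) - x‖^2 + η^2) :=
          Finset.sum_le_sum (fun t _ => hkey t)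
      _ = (‖f 0 - x‖^2 - ‖f T - x‖^2) + (T:ℝ)*η^2 := by
          rw [Finset.sum_add_distrib, Finset.sum_range_sub' (fun t => ‖f t - x‖^2),
            Finset.sum_const, Finset.card_range, nsmul_eq_mul]
      _ ≤ D + (T:ℝ)*η^2 := by nlinarith [hf0x, sq_nonneg ‖f T - x‖]
  have htel : ∑ t ∈ Finset.range T, ⟪r t, x - f t⟫ ≤ D/(2*η) + η*(T:ℝ)/2 := by
    have h2η : (0:ℝ) < 2*η := by linarith
    rw [← Finset.mul_sum] at hsum1
    have h3 : ∑ t ∈ Finset.range T, ⟪r t, x - f t⟫ ≤ (D + (T:ℝ)*η^2)/(2*η) := by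
      rw [le_div_iff₀ h2η]
      linarith [hsum1]
    refine h3.trans_eq ?_
    field_simp
  -- drift bounds
  have hdrift1 : ∀ s, ‖f (s+1) - f s‖ ≤ η := by
    intro s
    have h := hproj_le (f s + η • r s) (f s) (hmemf s)
    rw [← hfstep s] at h
    have h2 : f s + η • r s - f s = η • r s := by abel
    rw [h2, norm_smul, hrnorm s, Real.norm_eq_abs, mul_one] at h
    have habs : |η| = η := abs_of_pos hηpos
    rw [habs] at h
    nlinarith [norm_nonneg (f (s+1) - f s)]
  have hdriftk : ∀ a b : ℕ, ‖f (a + b) - f a‖ ≤ η * b := by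
    intro a b
    induction b with
    | zero => simp
    | succ n ih =>
      have h1 := hdrift1 (a + n)
      push_cast
      calc ‖f (a + (n+1)) - f a‖
          = ‖(f (a+n+1) - f (a+n)) + (f (a+n) - f a)‖ := by
            rw [show a + (n+1) = a+n+1 by ring]
            congr 1
            abel
        _ ≤ ‖f (a+n+1) - f (a+n)‖ + ‖f (a+n) - f a‖ := norm_add_le _ _
        _ ≤ η + η*n := add_le_add h1 ih
        _ = η * ((n:ℝ)+1) := by ring
  have hdrift : ∀ t, ‖f t - f (t/B*B)‖ ≤ η * ((t % B : ℕ) : ℝ) := by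
    intro t
    have h := hdriftk (t/B*B) (t % B)
    have he : t/B*B + t%B = t := by rw [mul_comm]; exact Nat.div_add_mod t B
    rwa [he] at h
  have hdriftsum : ∑ t ∈ Finset.range T, ⟪r t, f t - f (t/B*B)⟫
      ≤ η * ((T:ℝ)*((B:ℝ)-1)/2) := by
    calc ∑ t ∈ Finset.range T, ⟪r t, f t - f (t/B*B)⟫
        ≤ ∑ t ∈ Finset.range T, η * ((t % B : ℕ):ℝ) := by
          refine Finset.sum_le_sum fun t _ => ?_
          have h1 := real_inner_le_norm (r t) (f t - f (t/B*B))
          rw [hrnorm t, one_mul] at h1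
          exact h1.trans (hdrift t)
      _ = η * ∑ t ∈ Finset.range T, ((t % B : ℕ):ℝ) := by rw [Finset.mul_sum]
      _ ≤ η * ((T:ℝ)*((B:ℝ)-1)/2) :=
          mul_le_mul_of_nonneg_left (modsum_real B hB T) hηpos.le
  -- assemble
  calc (∑ t ∈ Finset.range T, ∑ i, r t i * x i)
        - ∑ t ∈ Finset.range T, ∑ i, r t i * f (t / B * B) i
      = ∑ t ∈ Finset.range T, (⟪r t, x - f t⟫ + ⟪r t, f t - f (t/B*B)⟫) := by
        rw [← Finset.sum_sub_distrib]
        refine Finset.sum_congr rfl fun t _ => ?_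
        rw [hip t x, hip t (f (t/B*B)), ← inner_add_right,
          show (x - f t) + (f t - f (t/B*B)) = x - f (t/B*B) by abel, inner_sub_right]
    _ = (∑ t ∈ Finset.range T, ⟪r t, x - f t⟫)
        + ∑ t ∈ Finset.range T, ⟪r t, f t - f (t/B*B)⟫ := Finset.sum_add_distrib
    _ ≤ (D/(2*η) + η*(T:ℝ)/2) + η*((T:ℝ)*((B:ℝ)-1)/2) := add_le_add htel hdriftsum
    _ = η*((T:ℝ)*(B:ℝ)) := by
        rw [hDeq]
        field_simp
        ring
    _ = Real.sqrt (D*(T:ℝ)*(B:ℝ)) := by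
        rw [show D*(T:ℝ)*(B:ℝ) = (η*((T:ℝ)*(B:ℝ)))^2 by rw [hDeq]; ring]
        rw [Real.sqrt_sq (by positivity)]
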